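/- The end compactification (Freudenthal–Hopf compactification) of the Cayley graph of a finitely generated group is stably visible. -/

import Mathlib

open Filter Topology

/-- If a walk avoids `K`, its endpoints lie in the same component of the complement. -/
lemma walk_avoid_componentComplMk {V : Type*} {Gr : SimpleGraph V} {K : Finset V}
    {a b : V} (w : Gr.Walk a b) (hw : ∀ v ∈ w.support, v ∉ (K : Set V))
    (ha : a ∉ (K : Set V)) (hb : b ∉ (K : Set V)) :
    Gr.componentComplMk ha = Gr.componentComplMk hb := by
  induction w with
  | nil => rfl
  | @cons u v c hadj w ih =>
      have hv : v ∉ (K : Set V) := hw v (by simp)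
      have h1 : Gr.componentComplMk ha = Gr.componentComplMk hv :=
        Gr.componentComplMk_eq_of_adj ha hv hadj
      exact h1.trans (ih (fun z hz => hw z (by simp [hz])) hv hb)

/-- The Cayley graph of a group `G` with respect to a generating set `S`. -/
def cayleyGraph {G : Type*} [Group G] (S : Set G) : SimpleGraph G where
  Adj a b := a ≠ b ∧ (a⁻¹ * b ∈ S ∨ b⁻¹ * a ∈ S)
  symm := by
    constructor
    rintro a b ⟨h1, h2⟩
    exact ⟨h1.symm, h2.symm⟩
  loopless := ⟨fun a h => h.1 rfl⟩

/-- A sequence of vertices converges to the end `ξ` in the end (Freudenthal--Hopf)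
compactification: for every finite `K`, the sequence eventually lies in the component
of the complement of `K` determined by `ξ`. -/
def TendstoEnd {V : Type*} (Gr : SimpleGraph V) (u : ℕ → V) (ξ : Gr.end) : Prop :=
  ∀ K : Finset V, ∀ᶠ n in atTop,
    ∃ h : u n ∉ (K : Set V), Gr.componentComplMk h = ξ.val (Opposite.op K)

/-- **Stable visibility of the end compactification.**
Let `G` be a finitely generated group with Cayley graph `Γ(G, S)`.  If the sequences
`(xₙ)` and `(yₙ)` converge in the end compactification to two distinct ends `ξ ≠ η`,
then there is a bounded subset of the Cayley graph intersecting every geodesic segment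
joining `yₙ` to `xₙ`. -/
theorem stmt_12 {G : Type*} [Group G] (S : Set G) (hSfin : S.Finite)
    (hSgen : Subgroup.closure S = ⊤)
    (ξ η : (cayleyGraph S).end) (hne : ξ ≠ η)
    (x y : ℕ → G)
    (hx : TendstoEnd (cayleyGraph S) x ξ) (hy : TendstoEnd (cayleyGraph S) y η)
    (p : ∀ n : ℕ, (cayleyGraph S).Walk (y n) (x n))
    (hp : ∀ n : ℕ, (p n).length = (cayleyGraph S).dist (y n) (x n)) :
    ∃ B : Set G, (∃ R : ℕ, ∀ g ∈ B, (cayleyGraph S).dist 1 g ≤ R) ∧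
      ∀ n : ℕ, ∃ v ∈ (p n).support, v ∈ B := by
  -- Since ξ ≠ η, the sections differ at some finite set K.
  have hval : ξ.val ≠ η.val := fun h => hne (Subtype.ext h)
  obtain ⟨Kop, hK⟩ := Function.ne_iff.mp hval
  set K : Finset G := Kop.unop with hKdef
  have hKop : Opposite.op K = Kop := rfl
  obtain ⟨N, hN⟩ := eventually_atTop.mp ((hx K).and (hy K))
  -- the bounded set: K together with finitely many initial points
  classical
  set Bf : Finset G := K ∪ (Finset.range N).image x with hBf
  refine ⟨(Bf : Set G), ⟨Bf.sup fun g => (cayleyGraph S).dist 1 g,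
    fun g hg => Finset.le_sup hg⟩, fun n => ?_⟩
  by_cases hn : n < N
  · exact ⟨x n, (p n).end_mem_support, by
      simp only [hBf, Finset.coe_union, Set.mem_union, Finset.coe_image]
      exact Or.inr ⟨n, by simp [hn]⟩⟩
  · obtain ⟨⟨hxn, hxc⟩, ⟨hyn, hyc⟩⟩ := hN n (le_of_not_gt hn)
    by_contra hcon
    push_neg at hcon
    have havoid : ∀ v ∈ (p n).support, v ∉ (K : Set G) := by
      intro v hv hvK
      exact hcon v hv (by simp only [hBf, Finset.coe_union, Set.mem_union]; exact Or.inl hvK)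
    have := walk_avoid_componentComplMk (p n) havoid hyn hxn
    rw [hyc, hxc] at this
    exact hK (by rw [← hKop]; exact this.symm)
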